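/- Let S be a left CP-semiring and e : ℕ → S a sequence of multiplicative idempotents (e i * e i = e i for all i) such that e i * e j = 0 whenever i < j. Then there exists a natural number n such that e i = 0 for all i > n. -/
import Mathlib

universe u

/-- A left CP-semiring: every cyclic left `S`-semimodule is projective. -/
def IsLeftCPSemiring (S : Type u) [Semiring S] : Prop :=
  ∀ (M : Type u) [AddCommMonoid M] [Module S M],
    (∃ m : M, Submodule.span S {m} = ⊤) → Module.Projective S M

section BourneAux

variable {S : Type u} [Semiring S] (I : Submodule S S)

/-- The Bourne congruence associated to a left ideal. -/
def bourneCon : AddCon S where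
  r x y := ∃ a ∈ I, ∃ b ∈ I, x + a = y + b
  iseqv := by
    refine ⟨fun x => ⟨0, I.zero_mem, 0, I.zero_mem, rfl⟩, ?_, ?_⟩
    · rintro x y ⟨a, ha, b, hb, h⟩; exact ⟨b, hb, a, ha, h.symm⟩
    · rintro x y z ⟨a, ha, b, hb, h1⟩ ⟨a', ha', b', hb', h2⟩
      refine ⟨a + a', I.add_mem ha ha', b' + b, I.add_mem hb' hb, ?_⟩
      calc x + (a + a') = (x + a) + a' := (add_assoc _ _ _).symm
        _ = (y + a') + b := by rw [h1, add_assoc, add_assoc, add_comm b a']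
        _ = (z + b') + b := by rw [h2]
        _ = z + (b' + b) := add_assoc _ _ _
  add' := by
    rintro x y w z ⟨a, ha, b, hb, h1⟩ ⟨a', ha', b', hb', h2⟩
    refine ⟨a + a', I.add_mem ha ha', b + b', I.add_mem hb hb', ?_⟩
    calc x + w + (a + a') = (x + a) + (w + a') := add_add_add_comm x w a a'
      _ = (y + b) + (z + b') := by rw [h1, h2]
      _ = y + z + (b + b') := add_add_add_comm y b z b'

instance bourneSMul : SMul S (bourneCon I).Quotient :=
  ⟨fun s => Quotient.map' (fun x => s * x) (by
    rintro x y ⟨a, ha, b, hb, h⟩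
    exact ⟨s * a, I.smul_mem s ha, s * b, I.smul_mem s hb, by
      rw [← mul_add, h, mul_add]⟩)⟩

@[simp] theorem bourne_smul_mk (s x : S) :
    s • ((x : (bourneCon I).Quotient)) = ((s * x : S) : (bourneCon I).Quotient) := rfl

instance bourneModule : Module S (bourneCon I).Quotient where
  one_smul := fun q => Quotient.inductionOn' q fun x => congrArg _ (one_mul x)
  mul_smul := fun r s q => Quotient.inductionOn' q fun x => congrArg Quotient.mk'' (mul_assoc r s x)
  smul_zero := fun s => congrArg Quotient.mk'' (mul_zero s)
  smul_add := fun s q₁ q₂ => Quotient.inductionOn₂' q₁ q₂ fun x y =>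
    congrArg Quotient.mk'' (mul_add s x y)
  add_smul := fun r s q => Quotient.inductionOn' q fun x =>
    congrArg Quotient.mk'' (add_mul r s x)
  zero_smul := fun q => Quotient.inductionOn' q fun x => congrArg Quotient.mk'' (zero_mul x)

/-- The projection to the Bourne quotient, as a linear map. -/
def bournePi : S →ₗ[S] (bourneCon I).Quotient where
  toFun x := (x : (bourneCon I).Quotient)
  map_add' x y := rfl
  map_smul' s x := rfl

theorem bournePi_surjective : Function.Surjective (bournePi I) :=
  fun q => Quotient.inductionOn' q fun x => ⟨x, rfl⟩

end BourneAux

/-- in a left CP-semiring, any sequence of multiplicative idempotents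
`e i` with `e i * e j = 0` for `i < j` is eventually zero. -/
theorem eventually_zero_of_orthogonal_idempotents
    {S : Type u} [Semiring S] (hS : IsLeftCPSemiring S)
    (e : ℕ → S) (hidem : ∀ i, e i * e i = e i)
    (horth : ∀ i j, i < j → e i * e j = 0) :
    ∃ n : ℕ, ∀ i, n < i → e i = 0 := by
  set I : Submodule S S := Submodule.span S (Set.range e) with hI
  have hmemI : ∀ i, e i ∈ I := fun i => Submodule.subset_span ⟨i, rfl⟩
  -- the Bourne quotient is cyclic
  have hcyc : ∃ m : (bourneCon I).Quotient, Submodule.span S {m} = ⊤ := by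
    refine ⟨(1 : S), ?_⟩
    rw [eq_top_iff]
    rintro q -
    refine Quotient.inductionOn' q fun x => ?_
    show ((x : S) : (bourneCon I).Quotient) ∈ Submodule.span S {((1 : S) : (bourneCon I).Quotient)}
    have : ((x : S) : (bourneCon I).Quotient) = x • ((1 : S) : (bourneCon I).Quotient) := by
      rw [bourne_smul_mk, mul_one]
    rw [this]
    exact Submodule.smul_mem _ x (Submodule.mem_span_singleton_self _)
  have hproj : Module.Projective S (bourneCon I).Quotient := hS _ hcyc
  obtain ⟨h, hh⟩ := Module.projective_lifting_property (bournePi I) LinearMap.id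
    (bournePi_surjective I)
  set f : S := h ((1 : S) : (bourneCon I).Quotient) with hf
  -- e i * f = 0 for all i
  have hef : ∀ i, e i * f = 0 := by
    intro i
    have h1 : ((e i : S) : (bourneCon I).Quotient) = 0 := by
      have : (0 : (bourneCon I).Quotient) = ((0 : S) : (bourneCon I).Quotient) := rfl
      rw [this, AddCon.eq]
      exact ⟨0, I.zero_mem, e i, hmemI i, by simp⟩
    calc e i * f = e i • h ((1 : S) : (bourneCon I).Quotient) := rfl
      _ = h (e i • ((1 : S) : (bourneCon I).Quotient)) := (h.map_smul _ _).symm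
      _ = h 0 := by rw [bourne_smul_mk, mul_one, h1]
      _ = 0 := h.map_zero
  -- f ≡ 1 mod I
  have hpi : bournePi I f = ((1 : S) : (bourneCon I).Quotient) := by
    have := congrArg (fun g => g ((1 : S) : (bourneCon I).Quotient)) hh
    simpa using this
  have hfi : ∃ a ∈ I, ∃ b ∈ I, f + a = 1 + b := (AddCon.eq _).mp hpi
  obtain ⟨a, ha, b, hb, hab⟩ := hfi
  rw [hI] at ha hb
  obtain ⟨ca, hca⟩ := Finsupp.mem_span_range_iff_exists_finsupp.mp ha
  obtain ⟨cb, hcb⟩ := Finsupp.mem_span_range_iff_exists_finsupp.mp hb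
  set n : ℕ := (ca.support ∪ cb.support).sup id with hn
  refine ⟨n, fun i hi => ?_⟩
  -- a * e i = 0 and b * e i = 0
  have key : ∀ (c : ℕ →₀ S), (∀ j ∈ c.support, j ≤ n) →
      (c.sum fun j s => s • e j) * e i = 0 := by
    intro c hc
    rw [Finsupp.sum, Finset.sum_mul]
    refine Finset.sum_eq_zero fun j hj => ?_
    rw [smul_mul_assoc, horth j i (lt_of_le_of_lt (hc j hj) hi), smul_zero]
  have hae : a * e i = 0 := by
    rw [← hca]
    exact key ca fun j hj => Finset.le_sup (f := id) (Finset.mem_union_left _ hj)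
  have hbe : b * e i = 0 := by
    rw [← hcb]
    exact key cb fun j hj => Finset.le_sup (f := id) (Finset.mem_union_right _ hj)
  have hfe : f * e i = e i := by
    have := congrArg (fun x => x * e i) hab
    simpa [add_mul, hae, hbe] using this
  calc e i = e i * e i := (hidem i).symm
    _ = e i * (f * e i) := by rw [hfe]
    _ = (e i * f) * e i := (mul_assoc _ _ _).symm
    _ = 0 := by rw [hef i, zero_mul]
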